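/- Let (M, d_M) be a compact metric space equipped with a finite Borel measure μ, let n ≥ 1, and let u : M × ℝⁿ → [0, ∞) be continuous with compact support. Let (H_i) be a sequence of polarizers in the class H₀, and define the iterated polarizations u_0 = u, u_{m+1} = (u_m)^{H_{m+1}}. Then there exist a continuous, nonnegative, compactly supported function f : M × ℝⁿ → [0, ∞) and a strictly increasing sequence of indices (m_k) such that u_{m_k} converges to f uniformly on M × ℝⁿ; in particular ∫ |f − u_{m_k}|^s d(μ ⊗ vol) → 0 for every 1 ≤ s < ∞, and sup |f − u_{m_k}| → 0. -/

import Mathlib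

open MeasureTheory Metric
open scoped RealInnerProductSpace ENNReal

noncomputable section

/-- Reflection of `ℝⁿ` across the hyperplane `{y : ⟨y, e⟩ = c}`. -/
def reflectHyp {n : ℕ} (e : EuclideanSpace ℝ (Fin n)) (c : ℝ)
    (y : EuclideanSpace ℝ (Fin n)) : EuclideanSpace ℝ (Fin n) :=
  y - (2 * (⟪y, e⟫ - c)) • e

/-- Polarization of `u : M × ℝⁿ → ℝ` with respect to the polarizer
`H = {y : ⟨y, e⟩ > c}`. -/
def polarize {M : Type*} {n : ℕ} (e : EuclideanSpace ℝ (Fin n)) (c : ℝ)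
    (u : M × EuclideanSpace ℝ (Fin n) → ℝ)
    (z : M × EuclideanSpace ℝ (Fin n)) : ℝ :=
  if c < ⟪z.2, e⟫ then max (u z) (u (z.1, reflectHyp e c z.2))
  else min (u z) (u (z.1, reflectHyp e c z.2))

/-- Iterated polarizations: `u_0 = u`, `u_{m+1} = (u_m)^{H_{m+1}}`, where the polarizer
`H_{m+1}` is determined by the unit vector `e m` and the constant `cs m`. -/
def iterPolarize {M : Type*} {n : ℕ} (e : ℕ → EuclideanSpace ℝ (Fin n)) (cs : ℕ → ℝ)
    (u : M × EuclideanSpace ℝ (Fin n) → ℝ) :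
    ℕ → (M × EuclideanSpace ℝ (Fin n) → ℝ)
  | 0 => u
  | m + 1 => polarize (e m) (cs m) (iterPolarize e cs u m)

variable {n : ℕ} {e : EuclideanSpace ℝ (Fin n)} {c : ℝ}

lemma norm_sub_smul_sq (he : ‖e‖ = 1) (w : EuclideanSpace ℝ (Fin n)) (t : ℝ) :
    ‖w - t • e‖ ^ 2 = ‖w‖ ^ 2 - 2 * t * ⟪w, e⟫ + t ^ 2 := by
  rw [norm_sub_sq_real, real_inner_smul_right, norm_smul, he]
  simp [mul_pow, sq_abs]
  ring

lemma reflect_sub_sq (he : ‖e‖ = 1) (y y' : EuclideanSpace ℝ (Fin n)) :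
    ‖reflectHyp e c y - y'‖ ^ 2
      = ‖y - y'‖ ^ 2 + 4 * (⟪y, e⟫ - c) * (⟪y', e⟫ - c) := by
  have h : reflectHyp e c y - y' = (y - y') - (2 * (⟪y, e⟫ - c)) • e := by
    rw [reflectHyp]; abel
  rw [h, norm_sub_smul_sq he, inner_sub_left]
  ring

lemma reflect_isometry (he : ‖e‖ = 1) (y y' : EuclideanSpace ℝ (Fin n)) :
    ‖reflectHyp e c y - reflectHyp e c y'‖ = ‖y - y'‖ := by
  have h : reflectHyp e c y - reflectHyp e c y'
      = (y - y') - (2 * (⟪y, e⟫ - ⟪y', e⟫)) • e := by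
    simp only [reflectHyp]
    have : (2 * (⟪y, e⟫ - ⟪y', e⟫)) • e
        = (2 * (⟪y, e⟫ - c)) • e - (2 * (⟪y', e⟫ - c)) • e := by
      rw [← sub_smul]; ring_nf
    rw [this]; abel
  have h2 : ‖reflectHyp e c y - reflectHyp e c y'‖ ^ 2 = ‖y - y'‖ ^ 2 := by
    rw [h, norm_sub_smul_sq he, inner_sub_left]
    ring
  nlinarith [norm_nonneg (reflectHyp e c y - reflectHyp e c y'), norm_nonneg (y - y')]


lemma sqle {a b : ℝ} (ha : 0 ≤ a) (hb : 0 ≤ b) (h : a ^ 2 ≤ b ^ 2) : a ≤ b := by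
  nlinarith

lemma abs_max_sub_min_le {a b a' b' ε : ℝ} (h1 : |a - a'| ≤ ε) (h2 : |b - b'| ≤ ε)
    (h3 : |a - b'| ≤ ε) (h4 : |b - a'| ≤ ε) : |max a b - min a' b'| ≤ ε := by
  rcases max_cases a b with ⟨hm, _⟩ | ⟨hm, _⟩ <;>
    rcases min_cases a' b' with ⟨hn, _⟩ | ⟨hn, _⟩ <;> rw [hm, hn] <;> assumption

section Polar

variable {M : Type*} [PseudoMetricSpace M] {n : ℕ} {e : EuclideanSpace ℝ (Fin n)} {c : ℝ}
  (v : M × EuclideanSpace ℝ (Fin n) → ℝ)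

lemma polarize_nonneg (hv : ∀ z, 0 ≤ v z) (z) : 0 ≤ polarize e c v z := by
  unfold polarize; split
  · exact le_max_of_le_left (hv z)
  · exact le_min (hv _) (hv _)

lemma polarize_le {C : ℝ} (hv : ∀ z, v z ≤ C) (z) : polarize e c v z ≤ C := by
  unfold polarize; split
  · exact max_le (hv _) (hv _)
  · exact min_le_of_left_le (hv _)

lemma polarize_support (he : ‖e‖ = 1) (hc : c < 0) {R : ℝ}
    (hv0 : ∀ z, 0 ≤ v z) (hv : ∀ z : M × EuclideanSpace ℝ (Fin n), R < ‖z.2‖ → v z = 0)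
    (z : M × EuclideanSpace ℝ (Fin n)) (hz : R < ‖z.2‖) : polarize e c v z = 0 := by
  unfold polarize; split
  · rename_i h
    have hR0 : (0:ℝ) ≤ ‖z.2‖ := norm_nonneg _
    have hsq : ‖z.2‖ ^ 2 ≤ ‖reflectHyp e c z.2‖ ^ 2 := by
      have := reflect_sub_sq (c := c) he z.2 (0 : EuclideanSpace ℝ (Fin n))
      simp only [sub_zero, inner_zero_left] at this
      nlinarith [this]
    have : ‖z.2‖ ≤ ‖reflectHyp e c z.2‖ := sqle hR0 (norm_nonneg _) hsq
    rw [hv z hz, hv (z.1, reflectHyp e c z.2) (lt_of_lt_of_le hz this), max_self]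
  · exact le_antisymm (le_trans (min_le_left _ _) (le_of_eq (hv z hz)))
      (le_min (hv0 _) (hv0 _))

lemma polarize_mod (he : ‖e‖ = 1) {δ ε : ℝ}
    (hv : ∀ z z' : M × EuclideanSpace ℝ (Fin n), dist z z' ≤ δ → |v z - v z'| ≤ ε) :
    ∀ z z' : M × EuclideanSpace ℝ (Fin n), dist z z' ≤ δ →
      |polarize e c v z - polarize e c v z'| ≤ ε := by
  intro z z' hd
  have hδ0 : (0:ℝ) ≤ δ := le_trans dist_nonneg hd
  have hd1 : dist z.1 z'.1 ≤ δ := by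
    rw [Prod.dist_eq] at hd; exact le_trans (le_max_left _ _) hd
  have hd2 : dist z.2 z'.2 ≤ δ := by
    rw [Prod.dist_eq] at hd; exact le_trans (le_max_right _ _) hd
  have hdp : ∀ y y' : EuclideanSpace ℝ (Fin n), dist y y' ≤ δ →
      dist ((z.1, y) : M × EuclideanSpace ℝ (Fin n)) (z'.1, y') ≤ δ := by
    intro y y' h; rw [Prod.dist_eq]; exact max_le hd1 h
  have hσσ : dist (reflectHyp e c z.2) (reflectHyp e c z'.2) ≤ δ := by
    rw [dist_eq_norm, reflect_isometry he, ← dist_eq_norm]; exact hd2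
  have hmix : ∀ y y' : EuclideanSpace ℝ (Fin n), (⟪y, e⟫ - c) * (⟪y', e⟫ - c) ≤ 0 →
      ‖y - y'‖ ≤ δ → dist (reflectHyp e c y) y' ≤ δ := by
    intro y y' h1 hab
    have hsq : ‖reflectHyp e c y - y'‖ ^ 2 ≤ ‖y - y'‖ ^ 2 := by
      rw [reflect_sub_sq he]; nlinarith
    rw [dist_eq_norm]
    exact sqle (norm_nonneg _) hδ0
      (le_trans hsq (by nlinarith [norm_nonneg (y - y')]))
  have hyy' : ‖z.2 - z'.2‖ ≤ δ := by rw [← dist_eq_norm]; exact hd2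
  have hy'y : ‖z'.2 - z.2‖ ≤ δ := by rw [← dist_eq_norm, dist_comm]; exact hd2
  simp only [polarize]
  by_cases h1 : c < ⟪z.2, e⟫ <;> by_cases h2 : c < ⟪z'.2, e⟫ <;>
    simp only [h1, h2, if_pos, if_neg, if_true, if_false]
  · refine le_trans (abs_max_sub_max_le_max _ _ _ _) (max_le (hv _ _ hd) ?_)
    exact hv _ _ (by rw [Prod.dist_eq]; exact max_le hd1 hσσ)
  · -- c < ⟪z.2,e⟫, ⟪z'.2,e⟫ ≤ c
    push_neg at h2
    refine abs_max_sub_min_le (hv _ _ hd)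
      (hv _ _ (by rw [Prod.dist_eq]; exact max_le hd1 hσσ))
      (hv (z.1, z.2) (z'.1, reflectHyp e c z'.2) ?_)
      (hv (z.1, reflectHyp e c z.2) (z'.1, z'.2) ?_)
    · refine hdp _ _ ?_
      rw [dist_comm]
      exact hmix z'.2 z.2 (mul_nonpos_of_nonpos_of_nonneg (by linarith) (by linarith)) hy'y
    · exact hdp _ _ (hmix z.2 z'.2 (mul_nonpos_of_nonneg_of_nonpos (by linarith) (by linarith)) hyy')
  · -- ⟪z.2,e⟫ ≤ c, c < ⟪z'.2,e⟫
    push_neg at h1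
    have hd1' : dist z'.1 z.1 ≤ δ := dist_comm z.1 z'.1 ▸ hd1
    have hσσ' : dist (reflectHyp e c z'.2) (reflectHyp e c z.2) ≤ δ := by
      rw [dist_comm]; exact hσσ
    rw [abs_sub_comm]
    refine abs_max_sub_min_le (hv _ _ (dist_comm z z' ▸ hd))
      (hv _ _ (by rw [Prod.dist_eq]; exact max_le hd1' hσσ'))
      (hv (z'.1, z'.2) (z.1, reflectHyp e c z.2) ?_)
      (hv (z'.1, reflectHyp e c z'.2) (z.1, z.2) ?_)
    · rw [Prod.dist_eq]
      refine max_le hd1' ?_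
      rw [dist_comm]
      exact hmix z.2 z'.2 (mul_nonpos_of_nonpos_of_nonneg (by linarith) (by linarith)) hyy'
    · rw [Prod.dist_eq]
      exact max_le hd1' (hmix z'.2 z.2 (mul_nonpos_of_nonneg_of_nonpos (by linarith) (by linarith)) hy'y)
  · refine le_trans (abs_min_sub_min_le_max _ _ _ _) (max_le (hv _ _ hd) ?_)
    exact hv _ _ (by rw [Prod.dist_eq]; exact max_le hd1 hσσ)

end Polar


set_option maxHeartbeats 1000000 in
set_option synthInstance.maxHeartbeats 200000 in
/-- sequential compactness of iterated polarizations of a continuous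
compactly supported function: a subsequence converges uniformly (hence in every `L^s`)
to a continuous nonnegative compactly supported function. -/
theorem stmt_10 {M : Type*} [MetricSpace M] [CompactSpace M]
    [MeasurableSpace M] [BorelSpace M] (μ : Measure M) [IsFiniteMeasure μ]
    {n : ℕ} (hn : 1 ≤ n)
    (u : M × EuclideanSpace ℝ (Fin n) → ℝ)
    (hcont : Continuous u) (hsupp : HasCompactSupport u) (hpos : ∀ z, 0 ≤ u z)
    (e : ℕ → EuclideanSpace ℝ (Fin n)) (cs : ℕ → ℝ)
    (he : ∀ i, ‖e i‖ = 1) (hcs : ∀ i, cs i < 0) :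
    ∃ (f : M × EuclideanSpace ℝ (Fin n) → ℝ) (mk : ℕ → ℕ),
      Continuous f ∧ HasCompactSupport f ∧ (∀ z, 0 ≤ f z) ∧
      StrictMono mk ∧
      TendstoUniformly (fun k => iterPolarize e cs u (mk k)) f Filter.atTop ∧
      (∀ s : ℝ, 1 ≤ s →
        Filter.Tendsto
          (fun k => ∫⁻ z, ENNReal.ofReal (|f z - iterPolarize e cs u (mk k) z| ^ s)
            ∂(μ.prod volume))
          Filter.atTop (nhds 0)) := by
  classical
  obtain ⟨R₀, hR₀⟩ :=
    (IsCompact.image hsupp (continuous_norm.comp continuous_snd)).bddAbove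
  set R : ℝ := max R₀ 0 with hRdef
  have hR0 : (0:ℝ) ≤ R := le_max_right _ _
  have huz : ∀ z, R < ‖z.2‖ → u z = 0 := by
    intro z hz
    by_contra h
    have hzs : z ∈ tsupport u := subset_tsupport u h
    have h1 : ‖z.2‖ ≤ R₀ := hR₀ ⟨z, hzs, rfl⟩
    have h2 : R₀ ≤ R := le_max_left _ _
    linarith
  obtain ⟨C₀, hC₀⟩ := hcont.bounded_above_of_compact_support hsupp
  set C : ℝ := max C₀ 0 with hCdef
  set U := iterPolarize e cs u with hUdef
  have hU0 : ∀ m z, 0 ≤ U m z := by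
    intro m; induction m with
    | zero => exact hpos
    | succ m ih => exact fun z => polarize_nonneg _ ih z
  have hUC : ∀ m z, U m z ≤ C := by
    intro m; induction m with
    | zero =>
      intro z
      have h2 := hC₀ z
      rw [Real.norm_eq_abs] at h2
      exact le_trans (le_trans (le_abs_self _) h2) (le_max_left _ _)
    | succ m ih => exact fun z => polarize_le _ ih z
  have hUz : ∀ m z, R < ‖z.2‖ → U m z = 0 := by
    intro m; induction m with
    | zero => exact huz
    | succ m ih => exact fun z hz => polarize_support _ (he m) (hcs m) (hU0 m) ih z hz
  have hUmod : ∀ ε > (0:ℝ), ∃ δ > (0:ℝ), ∀ m, ∀ z z', dist z z' ≤ δ → |U m z - U m z'| ≤ ε := by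
    intro ε hε
    obtain ⟨δ, hδ0, hδ⟩ := Metric.uniformContinuous_iff.mp
      (hsupp.uniformContinuous_of_continuous hcont) ε hε
    refine ⟨δ/2, by linarith, fun m => ?_⟩
    have base : ∀ z z', dist z z' ≤ δ/2 → |u z - u z'| ≤ ε := by
      intro z z' h
      have h2 := hδ (lt_of_le_of_lt h (by linarith))
      rw [Real.dist_eq] at h2
      exact h2.le
    induction m with
    | zero => exact base
    | succ m ih => exact polarize_mod _ (he m) ih
  have hUcont : ∀ m, Continuous (U m) := by
    intro m
    refine UniformContinuous.continuous (Metric.uniformContinuous_iff.mpr fun ε hε => ?_)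
    obtain ⟨δ, hδ0, H⟩ := hUmod (ε/2) (by linarith)
    exact ⟨δ, hδ0, fun {a b} h => by
      rw [Real.dist_eq]; exact lt_of_le_of_lt (H m a b h.le) (by linarith)⟩
  haveI : CompactSpace (closedBall (0 : EuclideanSpace ℝ (Fin n)) R) :=
    isCompact_iff_compactSpace.mp (isCompact_closedBall _ _)
  have hXc : ∀ m, Continuous (fun p : M × ↥(closedBall (0 : EuclideanSpace ℝ (Fin n)) R) =>
      U m (p.1, (p.2 : EuclideanSpace ℝ (Fin n)))) :=
    fun m => (hUcont m).comp (continuous_fst.prodMk (continuous_subtype_val.comp continuous_snd))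
  set g : ℕ → (BoundedContinuousFunction (M × ↥(closedBall (0 : EuclideanSpace ℝ (Fin n)) R)) ℝ) :=
    fun m => BoundedContinuousFunction.mkOfCompact ⟨_, hXc m⟩ with hg
  have hcomp : IsCompact (closure (Set.range g)) := by
    apply BoundedContinuousFunction.arzela_ascoli (Set.Icc (0:ℝ) C) isCompact_Icc
    · intro fb p hfb
      obtain ⟨m, hm⟩ := hfb
      rw [← hm]
      exact ⟨hU0 m _, hUC m _⟩
    · apply UniformEquicontinuous.equicontinuous
      rw [Metric.uniformEquicontinuous_iff]
      intro ε hε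
      obtain ⟨δ, hδ0, H⟩ := hUmod (ε/2) (by linarith)
      refine ⟨δ, hδ0, fun p q h i => ?_⟩
      obtain ⟨m, hm⟩ := i.2
      rw [← hm]
      show dist (g m p) (g m q) < ε
      rw [Real.dist_eq]
      refine lt_of_le_of_lt (H m (p.1, (p.2 : EuclideanSpace ℝ (Fin n))) (q.1, q.2) ?_)
        (by linarith)
      have : dist ((p.1, (p.2 : EuclideanSpace ℝ (Fin n))) : M × EuclideanSpace ℝ (Fin n))
          (q.1, (q.2 : EuclideanSpace ℝ (Fin n))) = dist p q := by
        simp [Prod.dist_eq, Subtype.dist_eq]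
      rw [this]
      exact h.le
  obtain ⟨glim, -, mk, hmk, htend⟩ :=
    hcomp.tendsto_subseq (fun m => subset_closure (Set.mem_range_self m))
  set f : M × EuclideanSpace ℝ (Fin n) → ℝ := fun z =>
    if h : ‖z.2‖ ≤ R then glim (z.1, ⟨z.2, mem_closedBall_zero_iff.mpr h⟩) else 0 with hfdef
  have hDto : Filter.Tendsto (fun k => dist (g (mk k)) glim) Filter.atTop (nhds 0) :=
    tendsto_iff_dist_tendsto_zero.mp htend
  have hbound : ∀ k z, |f z - U (mk k) z| ≤ dist (g (mk k)) glim := by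
    intro k z
    by_cases h : ‖z.2‖ ≤ R
    · have h1 : f z = glim (z.1, ⟨z.2, mem_closedBall_zero_iff.mpr h⟩) := by
        simp only [hfdef]; rw [dif_pos h]
      have h2 : U (mk k) z = g (mk k) (z.1, ⟨z.2, mem_closedBall_zero_iff.mpr h⟩) := rfl
      rw [h1, h2]
      calc |glim (z.1, ⟨z.2, mem_closedBall_zero_iff.mpr h⟩)
            - g (mk k) (z.1, ⟨z.2, mem_closedBall_zero_iff.mpr h⟩)|
          = dist (glim (z.1, ⟨z.2, mem_closedBall_zero_iff.mpr h⟩))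
            (g (mk k) (z.1, ⟨z.2, mem_closedBall_zero_iff.mpr h⟩)) := (Real.dist_eq _ _).symm
        _ ≤ dist glim (g (mk k)) := BoundedContinuousFunction.dist_coe_le_dist _
        _ = dist (g (mk k)) glim := dist_comm _ _
    · have h1 : f z = 0 := by simp only [hfdef]; rw [dif_neg h]
      rw [h1, hUz (mk k) z (not_le.mp h), sub_zero, abs_zero]
      exact dist_nonneg
  have htu : TendstoUniformly (fun k => U (mk k)) f Filter.atTop := by
    rw [Metric.tendstoUniformly_iff]
    intro ε hε
    filter_upwards [hDto.eventually_lt_const hε] with k hk z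
    rw [Real.dist_eq]
    exact lt_of_le_of_lt (hbound k z) hk
  have hfc : Continuous f :=
    htu.continuous (Filter.Eventually.of_forall fun k => hUcont (mk k)).frequently
  have hfpos : ∀ z, 0 ≤ f z := fun z =>
    ge_of_tendsto' (htu.tendsto_at z) (fun k => hU0 (mk k) z)
  have hfsupp : HasCompactSupport f := by
    apply HasCompactSupport.intro
      (isCompact_univ.prod (isCompact_closedBall (0 : EuclideanSpace ℝ (Fin n)) R))
    intro z hz
    simp only [Set.mem_prod, Set.mem_univ, true_and, mem_closedBall_zero_iff] at hz
    simp only [hfdef]; rw [dif_neg hz]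
  refine ⟨f, mk, hfc, hfsupp, hfpos, hmk, htu, ?_⟩
  intro s hs
  have hs0 : (0:ℝ) < s := lt_of_lt_of_le one_pos hs
  have hKm : MeasurableSet ((Set.univ : Set M) ×ˢ closedBall (0 : EuclideanSpace ℝ (Fin n)) R) :=
    MeasurableSet.univ.prod measurableSet_closedBall
  set ν := (μ.prod volume) ((Set.univ : Set M) ×ˢ closedBall (0 : EuclideanSpace ℝ (Fin n)) R) with hν
  have hνt : ν ≠ ⊤ := by
    rw [hν, Measure.prod_prod]
    exact ENNReal.mul_ne_top (measure_ne_top μ _) measure_closedBall_lt_top.ne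
  have hBound : ∀ k, (∫⁻ z, ENNReal.ofReal (|f z - U (mk k) z| ^ s) ∂(μ.prod volume))
      ≤ ENNReal.ofReal ((dist (g (mk k)) glim) ^ s) * ν := by
    intro k
    have heq : ∫⁻ z, Set.indicator ((Set.univ : Set M) ×ˢ closedBall (0 : EuclideanSpace ℝ (Fin n)) R)
        (fun _ => ENNReal.ofReal ((dist (g (mk k)) glim) ^ s)) z ∂(μ.prod volume)
        = ENNReal.ofReal ((dist (g (mk k)) glim) ^ s) * ν := by
      rw [lintegral_indicator hKm, setLIntegral_const]
    rw [← heq]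
    apply lintegral_mono
    intro z
    by_cases h : z ∈ (Set.univ : Set M) ×ˢ closedBall (0 : EuclideanSpace ℝ (Fin n)) R
    · rw [Set.indicator_of_mem h]
      exact ENNReal.ofReal_le_ofReal
        (Real.rpow_le_rpow (abs_nonneg _) (hbound k z) hs0.le)
    · rw [Set.indicator_of_notMem h]
      simp only [Set.mem_prod, Set.mem_univ, true_and, mem_closedBall_zero_iff] at h
      have h1 : f z = 0 := by simp only [hfdef]; rw [dif_neg h]
      simp only [h1, hUz (mk k) z (not_le.mp h), sub_zero, abs_zero,
        Real.zero_rpow hs0.ne', ENNReal.ofReal_zero, le_refl]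
  have hlim : Filter.Tendsto (fun k => ENNReal.ofReal ((dist (g (mk k)) glim) ^ s) * ν)
      Filter.atTop (nhds 0) := by
    have h1 : Filter.Tendsto (fun k => (dist (g (mk k)) glim) ^ s) Filter.atTop (nhds 0) := by
      have h2 := (Real.continuousAt_rpow_const 0 s (Or.inr hs0.le)).tendsto.comp hDto
      simpa [Function.comp_def, Real.zero_rpow hs0.ne'] using h2
    have h2 := ENNReal.tendsto_ofReal h1
    rw [ENNReal.ofReal_zero] at h2
    simpa using ENNReal.Tendsto.mul_const h2 (Or.inr hνt)
  exact tendsto_of_tendsto_of_tendsto_of_le_of_le tendsto_const_nhds hlim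
    (fun k => zero_le) hBound

end
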